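/- arXiv:1108.1124 — 8 statements merged into one kernel-verified Lean document; each statement's English description precedes it below -/
import Mathlib

section
/- Let (P, ≺) be a finite partially ordered set and let x, y be two distinct elements of P. In any sequence of permissible swaps starting from an ordering π, the relative order of x and y changes at most once; that is, no two elements can be swapped with each other more than once. -/
/-- An ordering of a finite poset `P`: a list of all elements of `P` without repetition. -/
def IsOrdering {P : Type*} (π : List P) : Prop := π.Nodup ∧ ∀ x : P, x ∈ π

/-- A permissible swap: exchange two adjacent elements `a b` with `a ≺ b`. -/
def PermissibleSwap {P : Type*} [PartialOrder P] (π σ : List P) : Prop :=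
  ∃ (l₁ l₂ : List P) (a b : P), a < b ∧ π = l₁ ++ a :: b :: l₂ ∧ σ = l₁ ++ b :: a :: l₂

/-- `σ` is reachable from `π` by a finite (possibly empty) sequence of permissible swaps. -/
def Reachable {P : Type*} [PartialOrder P] (π σ : List P) : Prop :=
  Relation.ReflTransGen PermissibleSwap π σ

/-- An ordering is terminal if no permissible swap applies to it. -/
def Terminal {P : Type*} [PartialOrder P] (π : List P) : Prop :=
  ∀ σ : List P, ¬ PermissibleSwap π σ

/-- `x` precedes `y` in the list `π` (occurs earlier). -/
def Precedes {P : Type*} [DecidableEq P] (π : List P) (x y : P) : Prop :=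
  π.idxOf x < π.idxOf y

/-- `x` and `y` are incomparable: neither `x ≺ y` nor `y ≺ x`. -/
def Incomp {P : Type*} [PartialOrder P] (x y : P) : Prop := ¬ x < y ∧ ¬ y < x

/-- `c` is an `(x,y)`-fence in `π`: a sequence starting at `x`, ending at `y`, whose
elements appear in this order (not necessarily consecutively) in `π`, with consecutive
elements incomparable. -/
def IsFence {P : Type*} [PartialOrder P] (π : List P) (x y : P) (c : List P) : Prop :=
  c.Chain' Incomp ∧ c.Sublist π ∧ c.head? = some x ∧ c.getLast? = some y

/-- There exists an `(x,y)`-fence in `π`. -/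
def HasFence {P : Type*} [PartialOrder P] (π : List P) (x y : P) : Prop :=
  ∃ c : List P, IsFence π x y c

/-- `(x,y)` is a critical pair in `π`: `x ≺ y`, `x` precedes `y` in `π`,
and there is no `(x,y)`-fence in `π`. -/
def Critical {P : Type*} [PartialOrder P] [DecidableEq P] (π : List P) (x y : P) : Prop :=
  x < y ∧ Precedes π x y ∧ ¬ HasFence π x y

open List in
lemma swap_idx_aux {P : Type*} [DecidableEq P]
    (l₁ l₂ : List P) (a b : P) (hnd : (l₁ ++ a :: b :: l₂).Nodup) (z : P) :
    (z = a ∧ idxOf z (l₁ ++ a :: b :: l₂) = l₁.length ∧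
        idxOf z (l₁ ++ b :: a :: l₂) = l₁.length + 1) ∨
    (z = b ∧ idxOf z (l₁ ++ a :: b :: l₂) = l₁.length + 1 ∧
        idxOf z (l₁ ++ b :: a :: l₂) = l₁.length) ∨
    (z ≠ a ∧ z ≠ b ∧ idxOf z (l₁ ++ a :: b :: l₂) = idxOf z (l₁ ++ b :: a :: l₂) ∧
       (idxOf z (l₁ ++ a :: b :: l₂) < l₁.length ∨
        l₁.length + 2 ≤ idxOf z (l₁ ++ a :: b :: l₂))) := by
  rw [List.nodup_append'] at hnd
  obtain ⟨h1, h2, hdisj⟩ := hnd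
  have hal : a ∉ l₁ := fun ha => hdisj ha (by simp)
  have hbl : b ∉ l₁ := fun hb => hdisj hb (by simp)
  have hba : a ≠ b := by intro he; subst he; simp at h2
  by_cases hz1 : z ∈ l₁
  · right; right
    have hza : z ≠ a := fun he => hal (he ▸ hz1)
    have hzb : z ≠ b := fun he => hbl (he ▸ hz1)
    refine ⟨hza, hzb, ?_, Or.inl ?_⟩
    · rw [idxOf_append_of_mem hz1, idxOf_append_of_mem hz1]
    · rw [idxOf_append_of_mem hz1]
      exact idxOf_lt_length_iff.mpr hz1
  · rw [idxOf_append_of_notMem hz1, idxOf_append_of_notMem hz1]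
    by_cases hza : z = a
    · subst hza
      exact Or.inl ⟨rfl, by simp, by rw [idxOf_cons_ne _ (Ne.symm hba), idxOf_cons_self]⟩
    · by_cases hzb : z = b
      · subst hzb
        exact Or.inr (Or.inl ⟨rfl,
          by rw [idxOf_cons_ne _ (fun h => hza h.symm), idxOf_cons_self], by simp⟩)
      · right; right
        refine ⟨hza, hzb, ?_, Or.inr ?_⟩
        · rw [idxOf_cons_ne _ (fun h => hza h.symm), idxOf_cons_ne _ (fun h => hzb h.symm),
            idxOf_cons_ne _ (fun h => hzb h.symm), idxOf_cons_ne _ (fun h => hza h.symm)]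
        · rw [idxOf_cons_ne _ (fun h => hza h.symm), idxOf_cons_ne _ (fun h => hzb h.symm)]
          omega

lemma swap_change {P : Type*} [PartialOrder P] [DecidableEq P]
    {π σ : List P} (h : PermissibleSwap π σ) (hnd : π.Nodup) {x y : P}
    (hch : ¬ (Precedes π x y ↔ Precedes σ x y)) :
    (x < y ∧ Precedes π x y ∧ ¬ Precedes σ x y) ∨
    (y < x ∧ ¬ Precedes π x y ∧ Precedes σ x y) := by
  obtain ⟨l₁, l₂, a, b, hab, hπ, hσ⟩ := h
  subst hπ hσ
  have hx := swap_idx_aux l₁ l₂ a b hnd x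
  have hy := swap_idx_aux l₁ l₂ a b hnd y
  unfold Precedes at *
  rcases hx with ⟨hxa, hx1, hx2⟩ | ⟨hxb, hx1, hx2⟩ | ⟨hxa, hxb, hx1, hx2⟩ <;>
    rcases hy with ⟨hya, hy1, hy2⟩ | ⟨hyb, hy1, hy2⟩ | ⟨hya, hyb, hy1, hy2⟩
  · exact absurd (by omega) hch
  · exact Or.inl ⟨hxa ▸ hyb ▸ hab, by omega, by omega⟩
  · exact absurd (by omega) hch
  · exact Or.inr ⟨hxb ▸ hya ▸ hab, by omega, by omega⟩
  · exact absurd (by omega) hch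
  · exact absurd (by omega) hch
  · exact absurd (by omega) hch
  · exact absurd (by omega) hch
  · exact absurd (by omega) hch

lemma swap_perm {P : Type*} [PartialOrder P] {π σ : List P} (h : PermissibleSwap π σ) :
    π.Perm σ := by
  obtain ⟨l₁, l₂, a, b, _, hπ, hσ⟩ := h
  subst hπ hσ
  exact (List.Perm.swap b a l₂).append_left l₁

open Classical in
/-- In any sequence of permissible swaps starting from `π`, the relative
order of two distinct elements `x` and `y` changes at most once. -/
theorem stmt_1 {P : Type*} [PartialOrder P] [DecidableEq P] (π : List P)
    (hπ : IsOrdering π) (x y : P) (hxy : x ≠ y)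
    (s : ℕ → List P) (m : ℕ) (hs0 : s 0 = π)
    (hswap : ∀ i < m, PermissibleSwap (s i) (s (i + 1))) :
    ((Finset.range m).filter
      (fun i => ¬ (Precedes (s i) x y ↔ Precedes (s (i + 1)) x y))).card ≤ 1 := by
  have hnd : ∀ i ≤ m, (s i).Nodup := by
    intro i hi
    induction i with
    | zero => rw [hs0]; exact hπ.1
    | succ n ih =>
        exact ((swap_perm (hswap n (by omega))).nodup_iff).mp (ih (by omega))
  set g : ℕ → Prop := fun i => Precedes (s i) x y with hg
  have hchg : ∀ k < m, ¬ (g k ↔ g (k+1)) →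
      (x < y ∧ g k ∧ ¬ g (k+1)) ∨ (y < x ∧ ¬ g k ∧ g (k+1)) :=
    fun k hk hc => swap_change (hswap k hk) (hnd k (by omega)) hc
  rw [Finset.card_le_one]
  intro i hi j hj
  simp only [Finset.mem_filter, Finset.mem_range] at hi hj
  obtain ⟨him, hic⟩ := hi
  obtain ⟨hjm, hjc⟩ := hj
  by_contra hne
  -- wlog i < j
  wlog hij : i < j generalizing i j
  · exact this j i hjm hjc him hic (Ne.symm hne) (by omega)
  rcases hchg i him hic with ⟨hlt, hgi, hgi1⟩ | ⟨hlt, hgi, hgi1⟩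
  · -- x < y : g is decreasing, so after ¬ g (i+1) we never get g j back
    have hdec : ∀ k < m, g (k+1) → g k := by
      intro k hk hk1
      by_cases hc : g k ↔ g (k+1)
      · exact hc.mpr hk1
      · rcases hchg k hk hc with ⟨_, h1, _⟩ | ⟨h2, _, _⟩
        · exact h1
        · exact absurd hlt (lt_asymm h2)
    have hmono : ∀ d k, k + d ≤ m → g (k + d) → g k := by
      intro d
      induction d with
      | zero => intro k _ h; exact h
      | succ n ih =>
          intro k hk h
          exact hdec k (by omega) (ih (k+1) (by omega) (by rw [show k+1+n = k+(n+1) by omega]; exact h))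
    rcases hchg j hjm hjc with ⟨_, hgj, _⟩ | ⟨h2, _, _⟩
    · exact hgi1 (hmono (j - (i+1)) (i+1) (by omega) (by rw [show i+1+(j-(i+1)) = j by omega]; exact hgj))
    · exact absurd hlt (lt_asymm h2)
  · -- y < x : g is increasing
    have hinc : ∀ k < m, g k → g (k+1) := by
      intro k hk hk0
      by_cases hc : g k ↔ g (k+1)
      · exact hc.mp hk0
      · rcases hchg k hk hc with ⟨h2, _, _⟩ | ⟨_, _, h1⟩
        · exact absurd hlt (lt_asymm h2)
        · exact h1
    have hmono : ∀ d k, k + d ≤ m → g k → g (k + d) := by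
      intro d
      induction d with
      | zero => intro k _ h; exact h
      | succ n ih =>
          intro k hk h
          rw [show k+(n+1) = k+1+n by omega]
          exact ih (k+1) (by omega) (hinc k (by omega) h)
    rcases hchg j hjm hjc with ⟨h2, _, _⟩ | ⟨_, hgj, _⟩
    · exact absurd hlt (lt_asymm h2)
    · exact hgj (by
        have := hmono (j - (i+1)) (i+1) (by omega) hgi1
        rwa [show i+1+(j-(i+1)) = j by omega] at this)
end

section
/- Let (P, ≺) be a finite partially ordered set, let π be an ordering of P, and let x, y ∈ P be incomparable elements (neither x ≺ y nor y ≺ x). If x precedes y in π, then x precedes y in every ordering σ reachable from π. -/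
lemma swap_prec {P : Type*} [PartialOrder P] [DecidableEq P]
    (l₁ l₂ : List P) (a b x y : P) (hab : a < b)
    (hnd : (l₁ ++ a :: b :: l₂).Nodup)
    (hy : y ∈ l₁ ++ a :: b :: l₂)
    (hincomp : Incomp x y)
    (h : Precedes (l₁ ++ a :: b :: l₂) x y) :
    Precedes (l₁ ++ b :: a :: l₂) x y := by
  classical
  have hxy : x ≠ y := fun e => by simp [Precedes, e] at h
  have hanb : a ≠ b := ne_of_lt hab
  rw [List.nodup_append] at hnd
  have ha₁ : a ∉ l₁ := fun hm => hnd.2.2 _ hm _ List.mem_cons_self rfl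
  have hb₁ : b ∉ l₁ := fun hm => hnd.2.2 _ hm _ (by simp) rfl
  set L := l₁.length with hL
  have ia_old : (l₁ ++ a :: b :: l₂).idxOf a = L := by
    rw [List.idxOf_append_of_notMem ha₁, List.idxOf_cons_self]; omega
  have ib_old : (l₁ ++ a :: b :: l₂).idxOf b = L + 1 := by
    rw [List.idxOf_append_of_notMem hb₁, List.idxOf_cons_ne _ hanb,
      List.idxOf_cons_self]
  have ib_new : (l₁ ++ b :: a :: l₂).idxOf b = L := by
    rw [List.idxOf_append_of_notMem hb₁, List.idxOf_cons_self]; omega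
  have ia_new : (l₁ ++ b :: a :: l₂).idxOf a = L + 1 := by
    rw [List.idxOf_append_of_notMem ha₁, List.idxOf_cons_ne _ hanb.symm,
      List.idxOf_cons_self]
  have hsame : ∀ z : P, z ≠ a → z ≠ b →
      (l₁ ++ b :: a :: l₂).idxOf z = (l₁ ++ a :: b :: l₂).idxOf z := by
    intro z hza hzb
    by_cases hz : z ∈ l₁
    · rw [List.idxOf_append_of_mem hz, List.idxOf_append_of_mem hz]
    · rw [List.idxOf_append_of_notMem hz, List.idxOf_append_of_notMem hz,
        List.idxOf_cons_ne _ (Ne.symm hza), List.idxOf_cons_ne _ (Ne.symm hzb),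
        List.idxOf_cons_ne _ (Ne.symm hzb), List.idxOf_cons_ne _ (Ne.symm hza)]
  unfold Precedes at h ⊢
  by_cases hxa : x = a
  · subst hxa
    have hyb : y ≠ b := fun e => hincomp.1 (e ▸ hab)
    have hya : y ≠ x := hxy.symm
    have hmb : b ∈ l₁ ++ x :: b :: l₂ := by simp
    have hne : (l₁ ++ x :: b :: l₂).idxOf y ≠ L + 1 := by
      intro e
      exact hyb ((List.idxOf_inj hy).mp (e.trans ib_old.symm))
    rw [ia_new, hsame y hya hyb]
    rw [ia_old] at h
    omega
  · by_cases hxb : x = b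
    · subst hxb
      have hya : y ≠ a := by
        intro e
        rw [e, ia_old, ib_old] at h; omega
      have hyb : y ≠ x := hxy.symm
      rw [ib_new, hsame y hya hyb]
      rw [ib_old] at h
      omega
    · by_cases hya : y = a
      · subst hya
        rw [ia_new, hsame x hxa hxb]
        rw [ia_old] at h
        omega
      · by_cases hyb : y = b
        · subst hyb
          have hma : a ∈ l₁ ++ a :: y :: l₂ := by simp
          have hmx : x ∈ l₁ ++ a :: y :: l₂ := by
            have := h
            rw [ib_old] at this
            exact List.idxOf_lt_length_iff.mp (lt_of_lt_of_le this (by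
              rw [← ib_old]; exact List.idxOf_le_length))
          have hne : (l₁ ++ a :: y :: l₂).idxOf x ≠ L := by
            intro e
            exact hxa ((List.idxOf_inj hmx).mp (e.trans ia_old.symm))
          rw [ib_new, hsame x hxa hxy]
          rw [ib_old] at h
          omega
        · rw [hsame x hxa hxb, hsame y hya hyb]
          exact h

/-- If `x ∥ y` and `x` precedes `y` in `π`, then `x` precedes `y` in every
ordering reachable from `π`. -/
theorem stmt_2 {P : Type*} [PartialOrder P] [DecidableEq P] (π : List P)
    (hπ : IsOrdering π) (x y : P) (hincomp : Incomp x y) (hprec : Precedes π x y) :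
    ∀ σ : List P, Reachable π σ → Precedes σ x y := by
  intro σ hreach
  suffices H : IsOrdering σ ∧ Precedes σ x y from H.2
  induction hreach with
  | refl => exact ⟨hπ, hprec⟩
  | tail hstep hswap ih =>
    obtain ⟨l₁, l₂, a, b, hab, h1, h2⟩ := hswap
    obtain ⟨⟨hnd, hmem⟩, hp⟩ := ih
    subst h1 h2
    have hperm : (l₁ ++ a :: b :: l₂).Perm (l₁ ++ b :: a :: l₂) :=
      List.Perm.append_left _ (List.Perm.swap _ _ _)
    refine ⟨⟨hperm.nodup_iff.mp hnd, fun z => hperm.mem_iff.mp (hmem z)⟩, ?_⟩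
    exact swap_prec l₁ l₂ a b x y hab hnd (hmem y) hincomp hp
end

section
/- Let (P, ≺) be a finite partially ordered set, let π be an ordering of P, and let σ be an ordering reachable from π. Then for all x, y ∈ P, there exists an (x,y)-fence in σ if and only if there exists an (x,y)-fence in π; that is, no sequence of permissible swaps can create or eliminate an (x,y)-fence. -/
lemma fence_transfer {P : Type*} [PartialOrder P] {l₁ l₂ : List P} {a b : P}
    (hcomp : ¬ Incomp a b) {x y : P}
    (h : HasFence (l₁ ++ a :: b :: l₂) x y) : HasFence (l₁ ++ b :: a :: l₂) x y := by
  obtain ⟨c, hchain, hsub, hhead, hlast⟩ := h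
  refine ⟨c, hchain, ?_, hhead, hlast⟩
  obtain ⟨u, v, rfl, hu, hv⟩ := List.sublist_append_iff.mp hsub
  rw [List.sublist_append_iff]
  refine ⟨u, v, rfl, hu, ?_⟩
  rcases List.sublist_cons_iff.mp hv with hv' | ⟨v', rfl, hv'⟩
  · exact hv'.trans (List.cons_sublist_cons.mpr (List.sublist_cons_self a l₂))
  · rcases List.sublist_cons_iff.mp hv' with hv'' | ⟨v'', rfl, hv''⟩
    · exact (List.cons_sublist_cons.mpr hv'').trans (List.sublist_cons_self b (a :: l₂))
    · exact absurd (List.isChain_cons_cons.mp (List.isChain_append.mp hchain).2.1).1 hcomp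

lemma hasFence_swap_iff {P : Type*} [PartialOrder P] {τ ρ : List P}
    (h : PermissibleSwap τ ρ) (x y : P) : HasFence ρ x y ↔ HasFence τ x y := by
  obtain ⟨l₁, l₂, a, b, hab, rfl, rfl⟩ := h
  constructor
  · exact fence_transfer (fun hc => hc.2 hab)
  · exact fence_transfer (fun hc => hc.1 hab)

/-- Permissible swaps can neither create nor eliminate an `(x,y)`-fence:
if `σ` is reachable from `π`, then `σ` has an `(x,y)`-fence iff `π` does. -/
theorem stmt_4 {P : Type*} [PartialOrder P] (π : List P) (hπ : IsOrdering π)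
    (σ : List P) (hreach : Reachable π σ) :
    ∀ x y : P, HasFence σ x y ↔ HasFence π x y := by
  induction hreach with
  | refl => exact fun x y => Iff.rfl
  | tail _ hstep ih => exact fun x y => (hasFence_swap_iff hstep x y).trans (ih x y)
end

section
/- Let (P, ≺) be a finite partially ordered set and let τ be a terminal ordering of P. Then τ contains no critical pair; that is, there are no elements x, y with x ≺ y, x preceding y in τ, and no (x,y)-fence in τ. -/
section Aux

variable {P : Type*} [PartialOrder P] [DecidableEq P]

lemma term_adj {τ : List P} (hterm : Terminal τ) {l₁ l₂ : List P} {a b : P}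
    (h : τ = l₁ ++ a :: b :: l₂) : ¬ a < b := fun hab =>
  hterm (l₁ ++ b :: a :: l₂) ⟨l₁, l₂, a, b, hab, h, rfl⟩

lemma idx_split {l₁ l₂ : List P} {a : P} (hn : (l₁ ++ a :: l₂).Nodup) :
    (l₁ ++ a :: l₂).idxOf a = l₁.length := by
  have ha : a ∉ l₁ := fun h => (List.nodup_append'.mp hn).2.2 h (List.mem_cons_self)
  rw [List.idxOf_append_of_notMem ha, List.idxOf_cons_self, Nat.add_zero]

lemma mem_left_of_idx_lt {l₁ l₂ : List P} {a x : P} (hn : (l₁ ++ a :: l₂).Nodup)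
    (h : (l₁ ++ a :: l₂).idxOf x < l₁.length) : x ∈ l₁ := by
  by_contra hx
  rw [List.idxOf_append_of_notMem hx] at h
  omega

/-- Decompose a list at two elements with increasing indices. -/
lemma before_split {τ : List P} (hn : τ.Nodup) {x y : P} (hx : x ∈ τ) (hy : y ∈ τ)
    (h : τ.idxOf x < τ.idxOf y) : ∃ l₁ l₂ l₃, τ = l₁ ++ x :: l₂ ++ y :: l₃ := by
  obtain ⟨t₁, t₂, rfl⟩ := List.append_of_mem hx
  have hidx : (t₁ ++ x :: t₂).idxOf x = t₁.length := idx_split hn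
  have hxy : x ≠ y := fun e => by subst e; omega
  have hyt : y ∈ t₂ := by
    rcases List.mem_append.mp hy with h1 | h2
    · have : (t₁ ++ x :: t₂).idxOf y = t₁.idxOf y := List.idxOf_append_of_mem h1
      have := List.idxOf_lt_length_iff.mpr h1
      omega
    · rcases List.mem_cons.mp h2 with h3 | h4
      · exact absurd h3.symm hxy
      · exact h4
  obtain ⟨s₁, s₂, rfl⟩ := List.append_of_mem hyt
  exact ⟨t₁, s₁, s₂, by simp⟩

/-- In a nodup list, a pair sublist means the first element has smaller index. -/
lemma pair_sublist_idx {τ : List P} (hn : τ.Nodup) {a b : P} (h : [a, b].Sublist τ) :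
    τ.idxOf a < τ.idxOf b := by
  induction τ with
  | nil => exact absurd (List.sublist_nil.mp h) (by simp)
  | cons c t ih =>
    cases h with
    | cons _ h' =>
      have ha : a ∈ t := h'.subset (by simp)
      have hb : b ∈ t := h'.subset (by simp)
      have hct : c ∉ t := (List.nodup_cons.mp hn).1
      have hca : c ≠ a := fun e => hct (e ▸ ha)
      have hcb : c ≠ b := fun e => hct (e ▸ hb)
      rw [List.idxOf_cons_ne _ hca,
        List.idxOf_cons_ne _ hcb]
      have := ih (List.nodup_cons.mp hn).2 h'
      omega
    | cons_cons _ h' =>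
      have hb : b ∈ t := h'.subset (by simp)
      have hab : a ≠ b := fun e => (List.nodup_cons.mp hn).1 (e ▸ hb)
      rw [List.idxOf_cons_self]
      rw [List.idxOf_cons_ne _ hab]
      omega

/-- If `d ++ [v]` is a sublist of nodup `τ` and `y` occurs after `v`,
then `d ++ [v] ++ [y]` is a sublist of `τ`. -/
lemma snoc_sublist {τ d : List P} {v y : P} (hn : τ.Nodup) (hd : (d ++ [v]).Sublist τ)
    (hy : y ∈ τ) (hlt : τ.idxOf v < τ.idxOf y) : (d ++ [v] ++ [y]).Sublist τ := by
  have hv : v ∈ τ := hd.subset (by simp)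
  obtain ⟨t₁, t₂, rfl⟩ := List.append_of_mem hv
  have hidxv : (t₁ ++ v :: t₂).idxOf v = t₁.length := idx_split hn
  have hvy : v ≠ y := fun e => by subst e; omega
  have hyt : y ∈ t₂ := by
    rcases List.mem_append.mp hy with h1 | h2
    · have : (t₁ ++ v :: t₂).idxOf y = t₁.idxOf y := List.idxOf_append_of_mem h1
      have := List.idxOf_lt_length_iff.mpr h1
      omega
    · rcases List.mem_cons.mp h2 with h3 | h4
      · exact absurd h3.symm hvy
      · exact h4
  have hvt₁ : v ∉ t₁ := fun h => (List.nodup_append'.mp hn).2.2 h (List.mem_cons_self)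
  have hvt₂ : v ∉ t₂ := ((List.nodup_append'.mp hn).2.1).notMem  -- check
  -- decompose the sublist
  obtain ⟨l₁, l₂, heq, h₁, h₂⟩ := List.sublist_append_iff.mp hd
  have hdt : d.Sublist t₁ := by
    cases l₂ with
    | nil =>
      rw [List.append_nil] at heq
      exact absurd (h₁.subset (heq ▸ (by simp : v ∈ d ++ [v]))) hvt₁
    | cons e l₂' =>
      have hlast : (e :: l₂').getLast? = some v := by
        have h1 : (d ++ [v]).getLast? = some v := List.getLast?_concat
        rw [heq] at h1
        rwa [List.getLast?_append_of_ne_nil l₁ (by simp)] at h1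
      cases h₂ with
      | cons _ h₃ =>
        exact absurd (h₃.subset (List.mem_of_mem_getLast? hlast)) hvt₂
      | cons_cons _ h₃ =>
        cases l₂' with
        | nil =>
          have : d = l₁ := by
            have := heq
            exact List.append_inj_left' this rfl
          exact this ▸ h₁
        | cons f l₂'' =>
          have : v ∈ f :: l₂'' := by
            have : (f :: l₂'').getLast? = some v := by
              rwa [List.getLast?_cons_cons] at hlast
            exact List.mem_of_mem_getLast? this
          exact absurd (h₃.subset this) hvt₂
  have : (d ++ ([v] ++ [y])).Sublist (t₁ ++ v :: t₂) :=
    hdt.append (List.cons_sublist_cons.mpr (List.singleton_sublist.mpr hyt))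
  simpa [List.append_assoc] using this

end Aux

section Main
variable {P : Type*} [PartialOrder P] [DecidableEq P]

/-- Extend a fence ending at `w` by an element `y` occurring after `w`, incomparable to `w`. -/
lemma fence_extend {τ : List P} (hn : τ.Nodup) {x w y : P} {c : List P}
    (hc : IsFence τ x w c) (hy : y ∈ τ) (hlt : τ.idxOf w < τ.idxOf y)
    (hwy : Incomp w y) : IsFence τ x y (c ++ [y]) := by
  obtain ⟨hch, hsub, hhd, hlast⟩ := hc
  have hcne : c ≠ [] := fun h => by simp [h] at hhd
  have hdrop : c.dropLast ++ [w] = c := List.dropLast_append_getLast? w hlast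
  refine ⟨?_, ?_, ?_, List.getLast?_concat⟩
  · refine List.IsChain.append hch (List.isChain_singleton y) ?_
    intro a ha b hb
    rw [hlast] at ha
    simp only [List.head?_cons, Option.mem_some_iff] at hb
    cases ha; cases hb; exact hwy
  · have hsub' : (c.dropLast ++ [w]).Sublist τ := by rw [hdrop]; exact hsub
    have h3 := snoc_sublist hn hsub' hy hlt
    have h2 : c.dropLast ++ [w] ++ [y] = c ++ [y] := by rw [hdrop]
    rwa [h2] at h3
  · rw [List.head?_append, hhd]; rfl

/-- Descent lemma: there is no fence from `x` to an element `w` (occurring before `y`)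
with `y < w`, provided `x < y` and there is no `(x,y)`-fence. -/
lemma descent {τ : List P} (hn : τ.Nodup) {x y : P} (hy : y ∈ τ) (hxy : x < y)
    (hnf : ¬ HasFence τ x y) :
    ∀ n (w : P) (c : List P), τ.idxOf w = n → τ.idxOf w < τ.idxOf y →
      IsFence τ x w c → y < w → False := by
  intro n
  induction n using Nat.strong_induction_on with
  | _ n ih =>
    intro w c hwn hwy hc hyw
    obtain ⟨hch, hsub, hhd, hlast⟩ := hc
    have hcne : c ≠ [] := fun h => by simp [h] at hhd
    obtain ⟨d, rfl⟩ : ∃ d, c = d ++ [w] :=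
      ⟨c.dropLast, (List.dropLast_append_getLast? w hlast).symm⟩
    cases d with
    | nil =>
      -- c = [w], so x = w and y < x, contradicting x < y
      simp only [List.nil_append, List.head?_cons, Option.some.injEq] at hhd
      exact absurd (hxy.trans hyw) (by rw [hhd]; exact lt_irrefl x)
    | cons e d' =>
      set d := e :: d' with hd
      have hdne : d ≠ [] := by simp [hd]
      obtain ⟨v, hv⟩ : ∃ v, d.getLast? = some v :=
        ⟨d.getLast hdne, (List.getLast?_eq_getLast hdne)⟩
      -- chain decomposition
      have hchd : d.Chain' Incomp ∧ Incomp v w := by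
        replace hch := List.isChain_append.mp hch
        refine ⟨hch.1, ?_⟩
        exact hch.2.2 v hv w rfl
      have hfd : IsFence τ x v d := by
        refine ⟨hchd.1, ((List.sublist_append_left d [w]).trans hsub), ?_, hv⟩
        simpa [hd] using hhd
      -- [v, w] is a sublist of τ
      have hvw : [v, w].Sublist τ := by
        have h1 : (d.dropLast ++ [v, w]).Sublist τ := by
          have : d.dropLast ++ [v] = d := List.dropLast_append_getLast? v hv
          have h2 : d.dropLast ++ [v] ++ [w] = d ++ [w] := by rw [this]
          rw [← h2] at hsub
          simpa [List.append_assoc] using hsub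
        exact (List.sublist_append_right d.dropLast [v, w]).trans h1
      have hvwidx : τ.idxOf v < τ.idxOf w := pair_sublist_idx hn hvw
      by_cases hvy : v < y
      · exact hchd.2.1 (hvy.trans hyw)
      by_cases hyv : y < v
      · exact ih (τ.idxOf v) (by omega) v d rfl (by omega) hfd hyv
      · exact hnf ⟨d ++ [y], fence_extend hn hfd hy (by omega) ⟨hvy, hyv⟩⟩

end Main

/-- A terminal ordering contains no critical pair. -/
theorem stmt_5 {P : Type*} [PartialOrder P] [DecidableEq P] (τ : List P)
    (hτ : IsOrdering τ) (hterm : Terminal τ) :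
    ∀ x y : P, ¬ Critical τ x y := by
  obtain ⟨hn, hmem⟩ := hτ
  suffices H : ∀ n (x y : P), τ.idxOf y = n → ¬ Critical τ x y by
    exact fun x y => H _ x y rfl
  intro n
  induction n using Nat.strong_induction_on with
  | _ n ih =>
    rintro x y hyn ⟨hxy, hprec, hnf⟩
    have hx : x ∈ τ := hmem x
    have hy : y ∈ τ := hmem y
    -- decompose τ just before y
    obtain ⟨l₁, l₂, l₃, hτeq⟩ := before_split hn hx hy hprec
    obtain ⟨m, w, hmw⟩ : ∃ m w, l₁ ++ x :: l₂ = m ++ [w] := by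
      refine ⟨(l₁ ++ x :: l₂).dropLast, (l₁ ++ x :: l₂).getLast (by simp), ?_⟩
      exact (List.dropLast_append_getLast (by simp)).symm
    have hτeq' : τ = m ++ w :: y :: l₃ := by
      rw [hτeq, hmw]; simp
    have hwlt : ¬ w < y := term_adj hterm hτeq'
    have hidxw : τ.idxOf w = m.length := by rw [hτeq']; exact idx_split (hτeq' ▸ hn)
    have hidxy : τ.idxOf y = m.length + 1 := by
      rw [hτeq']
      have : m ++ w :: y :: l₃ = (m ++ [w]) ++ y :: l₃ := by simp
      rw [this]
      have := idx_split (l₁ := m ++ [w]) (l₂ := l₃) (a := y)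
        (by rw [← this, ← hτeq']; exact hn)
      simpa using this
    have hxw : τ.idxOf x < τ.idxOf w := by
      have h1 : τ.idxOf x < τ.idxOf y := hprec
      have hxney : x ≠ w := by
        intro e; rw [e] at hxy; exact hwlt hxy
      have : τ.idxOf x ≠ τ.idxOf w :=
        fun e => hxney ((List.idxOf_inj hx).mp e)
      omega
    by_cases hyw : y < w
    · -- use IH at w to get a fence x → w, then descend
      have hxltw : x < w := hxy.trans hyw
      have hcw : ¬ Critical τ x w := ih (τ.idxOf w) (by omega) x w rfl
      have hfw : HasFence τ x w := by
        by_contra hno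
        exact hcw ⟨hxltw, hxw, hno⟩
      obtain ⟨c, hc⟩ := hfw
      exact descent hn hy hxy hnf (τ.idxOf w) w c rfl (by omega) hc hyw
    · -- w and y are incomparable
      have hwyinc : Incomp w y := ⟨hwlt, hyw⟩
      by_cases hxltw : x < w
      · -- (x, w) would be critical, contradicting IH
        have : ¬ HasFence τ x w := by
          rintro ⟨c, hc⟩
          exact hnf ⟨c ++ [y], fence_extend hn hc hy (by omega) hwyinc⟩
        exact ih (τ.idxOf w) (by omega) x w rfl ⟨hxltw, hxw, this⟩
      by_cases hwltx : w < x
      · exact hwlt (hwltx.trans hxy)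
      · -- x ∥ w : [x, w, y] is a fence
        have hxm : x ∈ m := by
          have : x ∈ m ++ [w] := hmw ▸ (by simp)
          rcases List.mem_append.mp this with h1 | h2
          · exact h1
          · simp only [List.mem_singleton] at h2
            rw [h2] at hxw; omega
        refine hnf ⟨[x, w, y], ?_, ?_, rfl, rfl⟩
        · exact List.isChain_cons_cons.mpr ⟨⟨hxltw, hwltx⟩,
            List.isChain_cons_cons.mpr ⟨hwyinc, List.isChain_singleton y⟩⟩
        · rw [hτeq']
          have h1 : [x].Sublist m := List.singleton_sublist.mpr hxm
          have h2 : ([x] ++ [w, y]).Sublist (m ++ w :: y :: l₃) :=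
            h1.append (List.cons_sublist_cons.mpr
              (List.cons_sublist_cons.mpr (List.nil_sublist l₃)))
          simpa using h2
end

section
/- Let (P, ≺) be a finite partially ordered set, let π be an ordering of P, and let x, y ∈ P with y ≺ x. If x precedes y in π, then x precedes y in every ordering σ reachable from π. -/
open List in
lemma key_swap {P : Type*} [PartialOrder P] [DecidableEq P] {l₁ l₂ : List P} {a b x y : P}
    (hnd : (l₁ ++ a :: b :: l₂).Nodup) (hab : a < b) (hxy : ¬ x < y)
    (h : Precedes (l₁ ++ a :: b :: l₂) x y) : Precedes (l₁ ++ b :: a :: l₂) x y := by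
  have hane : a ∉ l₁ := fun hm => (List.disjoint_of_nodup_append hnd) hm (by simp)
  have hbne : b ∉ l₁ := fun hm => (List.disjoint_of_nodup_append hnd) hm (by simp)
  have hab' : a ≠ b := ne_of_lt hab
  have idxa1 : idxOf a (l₁ ++ a :: b :: l₂) = l₁.length := by
    rw [idxOf_append_of_notMem hane, idxOf_cons_self, Nat.add_zero]
  have idxb1 : idxOf b (l₁ ++ a :: b :: l₂) = l₁.length + 1 := by
    rw [idxOf_append_of_notMem hbne, idxOf_cons_ne _ hab', idxOf_cons_self]
  have idxa2 : idxOf a (l₁ ++ b :: a :: l₂) = l₁.length + 1 := by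
    rw [idxOf_append_of_notMem hane, idxOf_cons_ne _ hab'.symm, idxOf_cons_self]
  have idxb2 : idxOf b (l₁ ++ b :: a :: l₂) = l₁.length := by
    rw [idxOf_append_of_notMem hbne, idxOf_cons_self, Nat.add_zero]
  have idxoth : ∀ z, z ∉ l₁ → ∀ u v : P, (z ≠ u) → (z ≠ v) →
      idxOf z (l₁ ++ u :: v :: l₂) = l₁.length + 2 + idxOf z l₂ := by
    intro z hz u v hzu hzv
    rw [idxOf_append_of_notMem hz, idxOf_cons_ne _ hzu.symm, idxOf_cons_ne _ hzv.symm]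
    omega
  unfold Precedes at h ⊢
  by_cases hx1 : x ∈ l₁
  · have hxlt : idxOf x l₁ < l₁.length := idxOf_lt_length_iff.mpr hx1
    rw [idxOf_append_of_mem hx1] at h ⊢
    by_cases hy1 : y ∈ l₁
    · rwa [idxOf_append_of_mem hy1] at h ⊢
    · by_cases hya : y = a
      · rw [hya, idxa2]; omega
      · by_cases hyb : y = b
        · rw [hyb, idxb2]; omega
        · rw [idxoth y hy1 b a hyb hya]; omega
  · by_cases hxa : x = a
    · rw [hxa, idxa1] at h; rw [hxa, idxa2]
      by_cases hy1 : y ∈ l₁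
      · have : idxOf y l₁ < l₁.length := idxOf_lt_length_iff.mpr hy1
        rw [idxOf_append_of_mem hy1] at h; omega
      · by_cases hya : y = a
        · rw [hya, idxa1] at h; omega
        · by_cases hyb : y = b
          · exact absurd (show x < y by rw [hxa, hyb]; exact hab) hxy
          · rw [idxoth y hy1 a b hya hyb] at h
            rw [idxoth y hy1 b a hyb hya]; omega
    · by_cases hxb : x = b
      · rw [hxb, idxb1] at h; rw [hxb, idxb2]
        by_cases hy1 : y ∈ l₁
        · have : idxOf y l₁ < l₁.length := idxOf_lt_length_iff.mpr hy1
          rw [idxOf_append_of_mem hy1] at h; omega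
        · by_cases hya : y = a
          · rw [hya, idxa1] at h; omega
          · by_cases hyb : y = b
            · rw [hyb, idxb1] at h; omega
            · rw [idxoth y hy1 a b hya hyb] at h
              rw [idxoth y hy1 b a hyb hya]; omega
      · rw [idxoth x hx1 a b hxa hxb] at h
        rw [idxoth x hx1 b a hxb hxa]
        by_cases hy1 : y ∈ l₁
        · have : idxOf y l₁ < l₁.length := idxOf_lt_length_iff.mpr hy1
          rw [idxOf_append_of_mem hy1] at h; omega
        · by_cases hya : y = a
          · rw [hya, idxa1] at h; omega
          · by_cases hyb : y = b
            · rw [hyb, idxb1] at h; omega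
            · rw [idxoth y hy1 a b hya hyb] at h
              rw [idxoth y hy1 b a hyb hya]; omega

lemma reachable_perm {P : Type*} [PartialOrder P] {π σ : List P} (h : Reachable π σ) :
    π.Perm σ := by
  induction h with
  | refl => exact List.Perm.refl _
  | tail _ s ih => exact ih.trans (swap_perm s)

/-- If `y ≺ x` and `x` precedes `y` in `π`, then `x` precedes `y` in every
ordering reachable from `π`. -/
theorem stmt_6 {P : Type*} [PartialOrder P] [DecidableEq P] (π : List P)
    (hπ : IsOrdering π) (x y : P) (hlt : y < x) (hprec : Precedes π x y) :
    ∀ σ : List P, Reachable π σ → Precedes σ x y := by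
  intro σ hσ
  induction hσ with
  | refl => exact hprec
  | tail hreach hstep ih =>
    rename_i τ σ'
    have hperm : π.Perm τ := reachable_perm hreach
    obtain ⟨l₁, l₂, a, b, hab, hτ, rfl⟩ := hstep
    subst hτ
    exact key_swap (hperm.nodup_iff.mp hπ.1) hab (asymm hlt) ih
end

section
/- Let (P, ≺) be a finite partially ordered set and let π be an ordering of P. Then there is exactly one terminal ordering reachable from π: if τ and τ' are terminal orderings both reachable from π, then τ = τ'. -/
open scoped Classical

/-- The number of pairs `(i,j)` with `i < j` and `l[i] < l[j]`. -/
noncomputable def swapMeasure {P : Type*} [PartialOrder P] : List P → ℕ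
  | [] => 0
  | x :: xs => xs.countP (fun y => decide (x < y)) + swapMeasure xs

lemma swapMeasure_swap {P : Type*} [PartialOrder P] {a b : P} (hab : a < b)
    (l₁ l₂ : List P) :
    swapMeasure (l₁ ++ b :: a :: l₂) + 1 = swapMeasure (l₁ ++ a :: b :: l₂) := by
  induction l₁ with
  | nil =>
      simp only [List.nil_append, swapMeasure, List.countP_cons, decide_eq_true_eq]
      have h1 : ¬ b < a := asymm hab
      simp [hab, h1]
      omega
  | cons x t ih =>
      have h2 := ((List.Perm.swap a b l₂).append_left t).countP_eq
        (fun y => decide (x < y))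
      simp only [List.cons_append, swapMeasure, List.append_eq] at *
      omega

lemma swapMeasure_lt {P : Type*} [PartialOrder P] {π σ : List P}
    (h : PermissibleSwap π σ) : swapMeasure σ < swapMeasure π := by
  obtain ⟨l₁, l₂, a, b, hab, hπ, hσ⟩ := h
  subst hπ; subst hσ
  have := swapMeasure_swap hab l₁ l₂
  omega

/-- Local confluence, asymmetric version: the second swap's prefix extends the first's. -/
lemma join_aux {P : Type*} [PartialOrder P] {a b c d : P} (hab : a < b) (hcd : c < d)
    (l₁ t m₂ l₂ : List P) (ht : a :: b :: l₂ = t ++ c :: d :: m₂) :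
    ∃ ρ, Reachable (l₁ ++ b :: a :: l₂) ρ ∧ Reachable ((l₁ ++ t) ++ d :: c :: m₂) ρ := by
  match t with
  | [] =>
      simp only [List.nil_append] at ht
      obtain ⟨rfl, rfl, rfl⟩ : a = c ∧ b = d ∧ l₂ = m₂ := by
        injection ht with h1 h2; injection h2 with h3 h4; exact ⟨h1, h3, h4⟩
      exact ⟨l₁ ++ b :: a :: l₂, Relation.ReflTransGen.refl, by
        simp only [List.append_nil]; exact Relation.ReflTransGen.refl⟩
  | [x] =>
      simp only [List.cons_append, List.nil_append] at ht
      obtain ⟨rfl, rfl, rfl⟩ : a = x ∧ b = c ∧ l₂ = d :: m₂ := by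
        injection ht with h1 h2; injection h2 with h3 h4; exact ⟨h1, h3, h4⟩
      have had : a < d := lt_trans hab hcd
      -- σ₁ = l₁ ++ b :: a :: d :: m₂, σ₂ = (l₁ ++ [a]) ++ d :: b :: m₂ = l₁ ++ a :: d :: b :: m₂
      -- common reduct: l₁ ++ d :: b :: a :: m₂
      refine ⟨l₁ ++ d :: b :: a :: m₂, ?_, ?_⟩
      · -- l₁ ++ b :: a :: d :: m₂ → l₁ ++ b :: d :: a :: m₂ → l₁ ++ d :: b :: a :: m₂
        refine Relation.ReflTransGen.head (b := l₁ ++ b :: d :: a :: m₂)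
          ⟨l₁ ++ [b], m₂, a, d, had, by simp, by simp⟩ ?_
        exact Relation.ReflTransGen.single
          ⟨l₁, a :: m₂, b, d, hcd, by first | rfl | simp, by first | rfl | simp⟩
      · -- l₁ ++ a :: d :: b :: m₂ → l₁ ++ d :: a :: b :: m₂ → l₁ ++ d :: b :: a :: m₂
        refine Relation.ReflTransGen.head (b := l₁ ++ d :: a :: b :: m₂)
          ⟨l₁, b :: m₂, a, d, had, by first | rfl | simp, by first | rfl | simp⟩ ?_
        exact Relation.ReflTransGen.single
          ⟨l₁ ++ [d], m₂, a, b, hab, by simp, by simp⟩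
  | x :: y :: t' =>
      simp only [List.cons_append] at ht
      obtain ⟨rfl, rfl, rfl⟩ : a = x ∧ b = y ∧ l₂ = t' ++ c :: d :: m₂ := by
        injection ht with h1 h2; injection h2 with h3 h4; exact ⟨h1, h3, h4⟩
      -- σ₁ = l₁ ++ b :: a :: t' ++ c :: d :: m₂, σ₂ = l₁ ++ a :: b :: t' ++ d :: c :: m₂
      refine ⟨l₁ ++ b :: a :: (t' ++ d :: c :: m₂), ?_, ?_⟩
      · exact Relation.ReflTransGen.single
          ⟨l₁ ++ b :: a :: t', m₂, c, d, hcd, by simp, by simp⟩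
      · exact Relation.ReflTransGen.single
          ⟨l₁, t' ++ d :: c :: m₂, a, b, hab, by simp, by simp⟩

/-- Local confluence. -/
lemma join_of_swaps {P : Type*} [PartialOrder P] {π σ₁ σ₂ : List P}
    (h₁ : PermissibleSwap π σ₁) (h₂ : PermissibleSwap π σ₂) :
    ∃ ρ, Reachable σ₁ ρ ∧ Reachable σ₂ ρ := by
  obtain ⟨l₁, l₂, a, b, hab, rfl, rfl⟩ := h₁
  obtain ⟨m₁, m₂, c, d, hcd, heq, rfl⟩ := h₂
  rcases List.append_eq_append_iff.mp heq with ⟨t, rfl, ht⟩ | ⟨t, rfl, ht⟩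
  · exact join_aux hab hcd l₁ t m₂ l₂ ht
  · obtain ⟨ρ, hρ₂, hρ₁⟩ := join_aux hcd hab m₁ t l₂ m₂ ht
    exact ⟨ρ, hρ₁, hρ₂⟩

lemma exists_terminal_aux {P : Type*} [PartialOrder P] :
    ∀ (n : ℕ) (π : List P), swapMeasure π ≤ n → ∃ τ, Reachable π τ ∧ Terminal τ := by
  intro n
  induction n with
  | zero =>
      intro π hn
      refine ⟨π, Relation.ReflTransGen.refl, fun σ hσ => ?_⟩
      have := swapMeasure_lt hσ; omega
  | succ n ih =>
      intro π hn
      by_cases ht : Terminal π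
      · exact ⟨π, Relation.ReflTransGen.refl, ht⟩
      · simp only [Terminal, not_forall, not_not] at ht
        obtain ⟨σ, hσ⟩ := ht
        have := swapMeasure_lt hσ
        obtain ⟨τ, h1, h2⟩ := ih σ (by omega)
        exact ⟨τ, Relation.ReflTransGen.head hσ h1, h2⟩

lemma exists_terminal {P : Type*} [PartialOrder P] (π : List P) :
    ∃ τ, Reachable π τ ∧ Terminal τ :=
  exists_terminal_aux (swapMeasure π) π le_rfl

lemma unique_terminal_aux {P : Type*} [PartialOrder P] :
    ∀ (n : ℕ) (π τ τ' : List P), swapMeasure π ≤ n →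
      Reachable π τ → Terminal τ → Reachable π τ' → Terminal τ' → τ = τ' := by
  intro n
  induction n with
  | zero =>
      intro π τ τ' hn h1 h2 h3 h4
      rcases Relation.ReflTransGen.cases_head h1 with rfl | ⟨σ, hσ, -⟩
      · rcases Relation.ReflTransGen.cases_head h3 with rfl | ⟨σ, hσ, -⟩
        · rfl
        · have := swapMeasure_lt hσ; omega
      · have := swapMeasure_lt hσ; omega
  | succ n ih =>
      intro π τ τ' hn h1 h2 h3 h4
      rcases Relation.ReflTransGen.cases_head h1 with rfl | ⟨σ₁, hσ₁, hr₁⟩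
      · rcases Relation.ReflTransGen.cases_head h3 with rfl | ⟨σ, hσ, -⟩
        · rfl
        · exact absurd hσ (h2 σ)
      · rcases Relation.ReflTransGen.cases_head h3 with rfl | ⟨σ₂, hσ₂, hr₂⟩
        · exact absurd hσ₁ (h4 σ₁)
        · obtain ⟨ρ, hρ₁, hρ₂⟩ := join_of_swaps hσ₁ hσ₂
          obtain ⟨τ'', hτ''r, hτ''t⟩ := exists_terminal ρ
          have hm₁ := swapMeasure_lt hσ₁
          have hm₂ := swapMeasure_lt hσ₂
          have e1 : τ = τ'' :=
            ih σ₁ τ τ'' (by omega) hr₁ h2 (hρ₁.trans hτ''r) hτ''t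
          have e2 : τ' = τ'' :=
            ih σ₂ τ' τ'' (by omega) hr₂ h4 (hρ₂.trans hτ''r) hτ''t
          rw [e1, e2]

/-- There is exactly one terminal ordering reachable from `π`. -/
theorem stmt_9 {P : Type*} [PartialOrder P] [Fintype P] (π : List P)
    (hπ : IsOrdering π) :
    ∃! τ : List P, Reachable π τ ∧ Terminal τ := by
  obtain ⟨τ, h1, h2⟩ := exists_terminal π
  exact ⟨τ, ⟨h1, h2⟩, fun τ' ⟨h1', h2'⟩ =>
    unique_terminal_aux (swapMeasure π) π τ' τ le_rfl h1' h2' h1 h2⟩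
end

section
/- Let (P, ≺) be a finite partially ordered set and let π be an ordering of P. Then all maximal sequences of permissible swaps starting from π have the same length; that is, the number of swaps carried out until a terminal ordering is reached is uniquely determined by π. -/
section Aux

open List
set_option linter.unusedSectionVars false

variable {P : Type*} [PartialOrder P]

lemma precedes_iff_sublist [DecidableEq P] {τ : List P} (hn : τ.Nodup) {x y : P}
    (hx : x ∈ τ) (hy : y ∈ τ) (hxy : x ≠ y) : Precedes τ x y ↔ [x, y] <+ τ := by
  induction τ with
  | nil => simp at hx
  | cons z t ih =>
    rcases eq_or_ne x z with rfl | hxz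
    · have hy' : y ∈ t := (List.mem_cons.mp hy).resolve_left (fun h => hxy h.symm)
      constructor
      · intro _
        exact (List.singleton_sublist.mpr hy').cons₂ x
      · intro _
        unfold Precedes
        simp [List.idxOf_cons_self, List.idxOf_cons_ne _ hxy]
    · rcases eq_or_ne y z with rfl | hyz
      · constructor
        · intro h
          unfold Precedes at h
          rw [List.idxOf_cons_self] at h
          omega
        · intro h
          rcases List.sublist_cons_iff.mp h with h' | ⟨r, hr, _⟩
          · exact absurd (h'.subset (by simp)) (List.nodup_cons.mp hn).1
          · exact absurd (by injection hr) hxy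
      · have hx' : x ∈ t := (List.mem_cons.mp hx).resolve_left hxz
        have hy' : y ∈ t := (List.mem_cons.mp hy).resolve_left hyz
        have hiff := ih (List.nodup_cons.mp hn).2 hx' hy'
        unfold Precedes at hiff ⊢
        rw [List.idxOf_cons_ne _ (Ne.symm hxz), List.idxOf_cons_ne _ (Ne.symm hyz),
          Nat.succ_lt_succ_iff]
        rw [hiff]
        constructor
        · intro h; exact h.cons z
        · intro h
          rcases List.sublist_cons_iff.mp h with h' | ⟨r, hr, _⟩
          · exact h'
          · exact absurd (by injection hr) hxz

lemma sublist_swap_transfer {u v : P} {l₁ l₂ c : List P}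
    (hc : c <+ l₁ ++ u :: v :: l₂)
    (hsplit : ∀ c₁ c₂ : List P, c ≠ c₁ ++ u :: v :: c₂) :
    c <+ l₁ ++ v :: u :: l₂ := by
  obtain ⟨d₁, d₂, rfl, h₁, h₂⟩ := List.sublist_append_iff.mp hc
  rcases List.sublist_cons_iff.mp h₂ with h | ⟨e, rfl, he⟩
  · exact h₁.append (h.trans ((List.sublist_cons_self u l₂).cons₂ v))
  · rcases List.sublist_cons_iff.mp he with h | ⟨f, rfl, hf⟩
    · exact h₁.append ((h.cons₂ u).cons v)
    · exact absurd rfl (hsplit d₁ f)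

lemma isFence_swap {u v : P} (huv : ¬ Incomp u v) {l₁ l₂ c : List P} {x y : P}
    (h : IsFence (l₁ ++ u :: v :: l₂) x y c) : IsFence (l₁ ++ v :: u :: l₂) x y c := by
  obtain ⟨hch, hsub, hh, hl⟩ := h
  refine ⟨hch, sublist_swap_transfer hsub ?_, hh, hl⟩
  rintro c₁ c₂ rfl
  exact huv (List.isChain_append_cons_cons.mp hch).2.1

lemma fence_head_last_sublist {c : List P} {x y : P} (hh : c.head? = some x)
    (hl : c.getLast? = some y) (hxy : x ≠ y) : [x, y] <+ c := by
  cases c with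
  | nil => simp at hh
  | cons z c' =>
    obtain rfl : z = x := by simpa using hh
    have hyc : y ∈ z :: c' := List.mem_of_getLast? hl
    have hy' : y ∈ c' := by
      rcases List.mem_cons.mp hyc with h | h
      · exact absurd h.symm hxy
      · exact h
    exact (List.singleton_sublist.mpr hy').cons₂ z

lemma fence_of_chain : ∀ (w : List P) (x y : P), x < y →
    List.Chain' (fun u v : P => ¬ u < v) (x :: (w ++ [y])) →
    ∃ c, c.Chain' Incomp ∧ c <+ x :: (w ++ [y]) ∧ c.head? = some x ∧ c.getLast? = some y := by
  intro w
  induction w with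
  | nil =>
    intro x y hxy hch
    unfold List.Chain' at hch
    rw [List.nil_append, List.isChain_cons_cons] at hch
    exact absurd hxy hch.1
  | cons z w ih =>
    intro x y hxy hch
    unfold List.Chain' at hch
    rw [List.cons_append, List.isChain_cons_cons] at hch
    obtain ⟨hxz, hch'⟩ := hch
    by_cases hzx : z < x
    · have hch'' : List.Chain' (fun u v : P => ¬ u < v) (x :: (w ++ [y])) := by
        unfold List.Chain'
        rw [List.isChain_cons]
        refine ⟨?_, (List.isChain_cons.mp hch').2⟩
        intro h hh hxh
        exact (List.isChain_cons.mp hch').1 h hh (lt_trans hzx hxh)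
      obtain ⟨c, hc1, hc2, hc3, hc4⟩ := ih x y hxy hch''
      exact ⟨c, hc1, hc2.trans ((List.sublist_cons_self z (w ++ [y])).cons₂ x), hc3, hc4⟩
    · by_cases hzy : z < y
      · obtain ⟨c, hc1, hc2, hc3, hc4⟩ := ih z y hzy hch'
        obtain ⟨c', rfl⟩ : ∃ c', c = z :: c' := by
          cases c with
          | nil => simp at hc3
          | cons a c' =>
            obtain rfl : a = z := by simpa using hc3
            exact ⟨c', rfl⟩
        refine ⟨x :: z :: c', ?_, hc2.cons₂ x, rfl, by simpa using hc4⟩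
        unfold List.Chain'
        rw [List.isChain_cons_cons]
        exact ⟨⟨hxz, hzx⟩, hc1⟩
      · by_cases hyz : y < z
        · exact absurd (lt_trans hxy hyz) hxz
        · refine ⟨[x, z, y], ?_, ?_, rfl, rfl⟩
          · unfold List.Chain'
            rw [List.isChain_cons_cons, List.isChain_cons_cons]
            exact ⟨⟨hxz, hzx⟩, ⟨hzy, hyz⟩, List.isChain_singleton y⟩
          · refine (?_ : [z, y] <+ z :: (w ++ [y])).cons₂ x
            exact (List.singleton_sublist.mpr (by simp)).cons₂ z

lemma terminal_chain' {τ : List P} (h : Terminal τ) :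
    List.Chain' (fun u v : P => ¬ u < v) τ := by
  induction τ with
  | nil => exact List.isChain_nil
  | cons z t ih =>
    have ht : Terminal t := by
      rintro σ ⟨l₁, l₂, a, b, hab, h1, h2⟩
      exact h (z :: l₁ ++ b :: a :: l₂) ⟨z :: l₁, l₂, a, b, hab, by rw [h1]; simp, by simp⟩
    unfold List.Chain'
    rw [List.isChain_cons]
    refine ⟨?_, ih ht⟩
    intro w hw hlt
    cases t with
    | nil => simp at hw
    | cons u t' =>
      obtain rfl : u = w := by simpa using hw
      exact h (u :: z :: t') ⟨[], t', z, u, hlt, rfl, rfl⟩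

open Classical in
/-- The finite set of critical pairs of `τ`. -/
noncomputable def critFinset [DecidableEq P] (τ : List P) : Finset (P × P) :=
  (τ.toFinset ×ˢ τ.toFinset).filter (fun p => Critical τ p.1 p.2)

lemma critFinset_mem [DecidableEq P] {τ : List P} {p : P × P} :
    p ∈ critFinset τ ↔ p.1 ∈ τ ∧ p.2 ∈ τ ∧ Critical τ p.1 p.2 := by
  simp [critFinset, Finset.mem_filter, Finset.mem_product, and_assoc]

lemma terminal_critFinset [DecidableEq P] {τ : List P} (hn : τ.Nodup) (ht : Terminal τ) :
    critFinset τ = ∅ := by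
  ext ⟨x, y⟩
  simp only [critFinset_mem, Finset.notMem_empty, iff_false]
  rintro ⟨hx, hy, hxy, hp, hnf⟩
  have hxy' : x ≠ y := ne_of_lt hxy
  have hsub : [x, y] <+ τ := (precedes_iff_sublist hn hx hy hxy').mp hp
  obtain ⟨r₁, r₂, rfl, hxr, hyr⟩ := List.cons_sublist_iff.mp hsub
  have hyr' : y ∈ r₂ := List.singleton_sublist.mp hyr
  obtain ⟨p₁, q₁, rfl⟩ := List.append_of_mem hxr
  obtain ⟨p₂, q₂, rfl⟩ := List.append_of_mem hyr'
  have hinfix : (x :: ((q₁ ++ p₂) ++ [y])) <:+: ((p₁ ++ x :: q₁) ++ (p₂ ++ y :: q₂)) :=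
    ⟨p₁, q₂, by simp⟩
  have hch := (terminal_chain' ht).infix hinfix
  obtain ⟨c, hc1, hc2, hc3, hc4⟩ := fence_of_chain (q₁ ++ p₂) x y hxy hch
  exact hnf ⟨c, hc1, hc2.trans hinfix.sublist, hc3, hc4⟩

lemma pair_eq_of_split {x y a b : P} {c₁ c₂ : List P}
    (h : [x, y] = c₁ ++ a :: b :: c₂) : x = a ∧ y = b := by
  have hl := congrArg List.length h
  simp only [List.length_cons, List.length_append, List.length_nil] at hl
  obtain rfl : c₁ = [] := List.length_eq_zero_iff.mp (by omega)
  obtain rfl : c₂ = [] := List.length_eq_zero_iff.mp (by omega)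
  simp only [List.nil_append] at h
  exact ⟨by injection h, by injection (by injection h : y :: ([] : List P) = b :: [])⟩

lemma swap_step [DecidableEq P] {τ σ : List P} (hn : τ.Nodup) (hfull : ∀ x : P, x ∈ τ)
    (hsw : PermissibleSwap τ σ) :
    σ.Nodup ∧ (∀ x : P, x ∈ σ) ∧ (critFinset τ).card = (critFinset σ).card + 1 := by
  obtain ⟨l₁, l₂, a, b, hab, rfl, rfl⟩ := hsw
  have hperm : (l₁ ++ a :: b :: l₂) ~ (l₁ ++ b :: a :: l₂) :=
    List.Perm.append_left l₁ (List.Perm.swap b a l₂)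
  have hnσ : (l₁ ++ b :: a :: l₂).Nodup := hperm.nodup_iff.mp hn
  have hfullσ : ∀ x : P, x ∈ l₁ ++ b :: a :: l₂ := fun x => hperm.mem_iff.mp (hfull x)
  have hab' : a ≠ b := ne_of_lt hab
  have habsub : [a, b] <+ l₁ ++ a :: b :: l₂ :=
    List.sublist_append_of_sublist_right (((List.nil_sublist l₂).cons₂ b).cons₂ a)
  have hbasub : [b, a] <+ l₁ ++ b :: a :: l₂ :=
    List.sublist_append_of_sublist_right (((List.nil_sublist l₂).cons₂ a).cons₂ b)
  have hPab : Precedes (l₁ ++ a :: b :: l₂) a b :=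
    (precedes_iff_sublist hn (hfull a) (hfull b) hab').mpr habsub
  have hPba : Precedes (l₁ ++ b :: a :: l₂) b a :=
    (precedes_iff_sublist hnσ (hfullσ b) (hfullσ a) (Ne.symm hab')).mpr hbasub
  have hnPabσ : ¬ Precedes (l₁ ++ b :: a :: l₂) a b := by
    intro h
    unfold Precedes at h hPba
    omega
  have hIab : ¬ Incomp a b := fun h => h.1 hab
  have hIba : ¬ Incomp b a := fun h => h.2 hab
  have hNoF : ¬ HasFence (l₁ ++ a :: b :: l₂) a b := by
    rintro ⟨c, hc⟩
    have hc' := isFence_swap hIab hc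
    have hsb : [a, b] <+ l₁ ++ b :: a :: l₂ :=
      (fence_head_last_sublist hc'.2.2.1 hc'.2.2.2 hab').trans hc'.2.1
    exact hnPabσ ((precedes_iff_sublist hnσ (hfullσ a) (hfullσ b) hab').mpr hsb)
  have hCritab : Critical (l₁ ++ a :: b :: l₂) a b := ⟨hab, hPab, hNoF⟩
  have hCritIff : ∀ x y : P, (x, y) ≠ (a, b) →
      (Critical (l₁ ++ a :: b :: l₂) x y ↔ Critical (l₁ ++ b :: a :: l₂) x y) := by
    intro x y hne
    constructor
    · rintro ⟨hxy, hp, hnf⟩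
      have hxy' : x ≠ y := ne_of_lt hxy
      refine ⟨hxy, ?_, ?_⟩
      · have hs := (precedes_iff_sublist hn (hfull x) (hfull y) hxy').mp hp
        have hs' : [x, y] <+ l₁ ++ b :: a :: l₂ := by
          refine sublist_swap_transfer hs ?_
          intro c₁ c₂ h
          obtain ⟨rfl, rfl⟩ := pair_eq_of_split h
          exact hne rfl
        exact (precedes_iff_sublist hnσ (hfullσ x) (hfullσ y) hxy').mpr hs'
      · rintro ⟨c, hc⟩
        exact hnf ⟨c, isFence_swap hIba hc⟩
    · rintro ⟨hxy, hp, hnf⟩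
      have hxy' : x ≠ y := ne_of_lt hxy
      refine ⟨hxy, ?_, ?_⟩
      · have hs := (precedes_iff_sublist hnσ (hfullσ x) (hfullσ y) hxy').mp hp
        have hs' : [x, y] <+ l₁ ++ a :: b :: l₂ := by
          refine sublist_swap_transfer hs ?_
          intro c₁ c₂ h
          obtain ⟨rfl, rfl⟩ := pair_eq_of_split h
          exact absurd hab (not_lt_of_gt hxy)
        exact (precedes_iff_sublist hn (hfull x) (hfull y) hxy').mpr hs'
      · rintro ⟨c, hc⟩
        exact hnf ⟨c, isFence_swap hIab hc⟩
  have hset : critFinset (l₁ ++ a :: b :: l₂) = insert (a, b) (critFinset (l₁ ++ b :: a :: l₂)) := by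
    ext ⟨x, y⟩
    simp only [critFinset_mem, Finset.mem_insert]
    constructor
    · rintro ⟨hx, hy, hc⟩
      by_cases h : (x, y) = (a, b)
      · exact Or.inl h
      · exact Or.inr ⟨hperm.mem_iff.mp hx, hperm.mem_iff.mp hy, (hCritIff x y h).mp hc⟩
    · rintro (h | ⟨hx, hy, hc⟩)
      · rw [Prod.mk.injEq] at h
        obtain ⟨rfl, rfl⟩ := h
        exact ⟨hfull x, hfull y, hCritab⟩
      · by_cases h : (x, y) = (a, b)
        · rw [Prod.mk.injEq] at h
          obtain ⟨rfl, rfl⟩ := h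
          exact ⟨hfull x, hfull y, hCritab⟩
        · exact ⟨hperm.mem_iff.mpr hx, hperm.mem_iff.mpr hy, (hCritIff x y h).mpr hc⟩
  have hnotmem : (a, b) ∉ critFinset (l₁ ++ b :: a :: l₂) := by
    intro h
    exact hnPabσ (critFinset_mem.mp h).2.2.2.1
  exact ⟨hnσ, hfullσ, by rw [hset, Finset.card_insert_of_notMem hnotmem]⟩

lemma maximal_length [DecidableEq P] (π : List P) (hπ : IsOrdering π)
    (s : ℕ → List P) (m : ℕ) (hs0 : s 0 = π)
    (hswap : ∀ i < m, PermissibleSwap (s i) (s (i + 1))) (hterm : Terminal (s m)) :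
    m = (critFinset π).card := by
  have key : ∀ i ≤ m, (s i).Nodup ∧ (∀ x : P, x ∈ s i) ∧
      (critFinset π).card = (critFinset (s i)).card + i := by
    intro i
    induction i with
    | zero => intro _; rw [hs0]; exact ⟨hπ.1, hπ.2, rfl⟩
    | succ j ihj =>
      intro hj
      obtain ⟨hn, hf, hcard⟩ := ihj (Nat.le_of_succ_le hj)
      obtain ⟨hn', hf', hcard'⟩ := swap_step hn hf (hswap j hj)
      exact ⟨hn', hf', by omega⟩
    
  obtain ⟨hn, _, hcard⟩ := key m le_rfl
  rw [terminal_critFinset hn hterm] at hcard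
  simpa using hcard.symm

end Aux

/-- All maximal sequences of permissible swaps starting from `π` (i.e.
those ending at a terminal ordering) have the same length. -/
theorem stmt_10 {P : Type*} [PartialOrder P] (π : List P) (hπ : IsOrdering π)
    (s s' : ℕ → List P) (m m' : ℕ)
    (hs0 : s 0 = π) (hswap : ∀ i < m, PermissibleSwap (s i) (s (i + 1)))
    (hterm : Terminal (s m))
    (hs0' : s' 0 = π) (hswap' : ∀ i < m', PermissibleSwap (s' i) (s' (i + 1)))
    (hterm' : Terminal (s' m')) :
    m = m' := by
  classical
  rw [maximal_length π hπ s m hs0 hswap hterm,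
    maximal_length π hπ s' m' hs0' hswap' hterm']
end

section
/- Let (P, ≺) be a finite partially ordered set, let τ be an ordering of P, and suppose x ≺ y, x precedes y in τ, there is no (x,y)-fence in τ, and every pair of elements of P separated by fewer elements of τ than x and y are is not critical in any terminal ordering. If moreover no pair of elements separated in τ by fewer elements than separate x and y is critical when τ is terminal, then for every element z lying strictly between x and y in a terminal τ, either z ≺ x and z ≺ y (z is "small") or x ≺ z and y ≺ z (z is "large"). -/
section Aux

variable {P : Type*} [DecidableEq P]

private lemma pairwise_idxOf {τ : List P} (h : τ.Nodup) :
    τ.Pairwise (fun a b => τ.idxOf a < τ.idxOf b) := by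
  rw [List.pairwise_iff_get]
  intro i j hij
  rw [List.get_idxOf h, List.get_idxOf h]
  exact hij

private lemma sublist_of_pairwise :
    ∀ (τ c : List P), (∀ a ∈ c, a ∈ τ) →
      c.Pairwise (fun a b => τ.idxOf a < τ.idxOf b) → c.Sublist τ
  | τ, [], _, _ => List.nil_sublist τ
  | [], a :: c, hmem, _ => absurd (hmem a (by simp)) (by simp)
  | h :: τ', a :: c, hmem, hp => by
    rcases List.pairwise_cons.1 hp with ⟨ha, hc⟩
    by_cases hah : a = h
    · subst hah
      apply List.cons_sublist_cons.2
      apply sublist_of_pairwise τ' c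
      · intro b hb
        have hne : b ≠ a := by
          intro e; subst e
          exact lt_irrefl _ (ha b hb)
        have : b ∈ a :: τ' := hmem b (by simp [hb])
        simpa [hne] using this
      · refine hc.imp_of_mem ?_
        intro b d hb hd hbd
        have hnb : b ≠ a := by
          intro e; subst e; exact lt_irrefl _ (ha b hb)
        have hnd : d ≠ a := by
          intro e; subst e; exact lt_irrefl _ (ha d hd)
        rw [List.idxOf_cons_ne _ hnb.symm, List.idxOf_cons_ne _ hnd.symm] at hbd
        omega
    · have hkey : ∀ b ∈ a :: c, b ≠ h := by
        intro b hb
        rcases List.mem_cons.1 hb with rfl | hb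
        · exact hah
        · intro e; subst e
          have := ha b hb
          rw [List.idxOf_cons_self] at this
          omega
      have hsub : (a :: c).Sublist τ' := by
        apply sublist_of_pairwise τ' (a :: c)
        · intro b hb
          have : b ∈ h :: τ' := hmem b hb
          simpa [hkey b hb] using this
        · refine hp.imp_of_mem ?_
          intro b d hb hd hbd
          rw [List.idxOf_cons_ne _ (hkey b hb).symm,
            List.idxOf_cons_ne _ (hkey d hd).symm] at hbd
          omega
      exact hsub.cons h

private lemma head_le {τ : List P} {c : List P} {z : P}
    (hp : c.Pairwise (fun a b => τ.idxOf a < τ.idxOf b))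
    (hh : c.head? = some z) : ∀ b ∈ c, τ.idxOf z ≤ τ.idxOf b := by
  cases c with
  | nil => simp at hh
  | cons a t =>
    simp only [List.head?_cons, Option.some.injEq] at hh
    subst hh
    intro b hb
    rcases List.mem_cons.1 hb with rfl | hb
    · exact le_refl _
    · exact le_of_lt ((List.pairwise_cons.1 hp).1 b hb)

private lemma le_last :
    ∀ {c : List P} {τ : List P} {z : P},
      c.Pairwise (fun a b => τ.idxOf a < τ.idxOf b) →
      c.getLast? = some z → ∀ b ∈ c, τ.idxOf b ≤ τ.idxOf z
  | [], _, _, _, hh => by simp at hh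
  | [a], τ, z, _, hh => by
    simp only [List.getLast?_singleton, Option.some.injEq] at hh
    subst hh; simp
  | a :: d :: t, τ, z, hp, hh => by
    have hh' : (d :: t).getLast? = some z := by
      simpa using hh
    have hz : z ∈ d :: t := List.mem_of_mem_getLast? (by simp [hh'])
    rcases List.pairwise_cons.1 hp with ⟨ha, hp'⟩
    intro b hb
    rcases List.mem_cons.1 hb with rfl | hb
    · exact le_of_lt (ha z hz)
    · exact le_last hp' hh' b hb

end Aux

section Fence

variable {P : Type*} [PartialOrder P] [DecidableEq P]

private lemma fence_base {τ : List P} (hnd : τ.Nodup) {x z y : P}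
    (hx : x ∈ τ) (hz : z ∈ τ) (hy : y ∈ τ)
    (h1 : τ.idxOf x < τ.idxOf z) (h2 : τ.idxOf z < τ.idxOf y)
    (i1 : Incomp x z) (i2 : Incomp z y) : HasFence τ x y := by
  refine ⟨[x, z, y], ?_, ?_, by simp, by simp⟩
  · exact List.isChain_cons_cons.2 ⟨i1, List.isChain_cons_cons.2 ⟨i2, List.isChain_singleton _⟩⟩
  · apply sublist_of_pairwise
    · intro a ha
      rcases List.mem_cons.1 ha with rfl | ha
      · exact hx
      rcases List.mem_cons.1 ha with rfl | ha
      · exact hz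
      rcases List.mem_cons.1 ha with rfl | ha
      · exact hy
      · simp at ha
    · refine List.pairwise_cons.2 ⟨?_, List.pairwise_cons.2 ⟨?_, ?_⟩⟩
      · intro b hb
        rcases List.mem_cons.1 hb with rfl | hb
        · exact h1
        rcases List.mem_cons.1 hb with rfl | hb
        · omega
        · simp at hb
      · intro b hb
        rcases List.mem_cons.1 hb with rfl | hb
        · exact h2
        · simp at hb
      · simp

private lemma fence_prepend {τ : List P} (hnd : τ.Nodup) {x z y : P}
    (hx : x ∈ τ) (hlt : τ.idxOf x < τ.idxOf z) (hinc : Incomp x z)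
    (h : HasFence τ z y) : HasFence τ x y := by
  obtain ⟨c, hch, hsub, hhead, hlast⟩ := h
  cases c with
  | nil => simp at hhead
  | cons a t =>
    simp only [List.head?_cons, Option.some.injEq] at hhead
    subst hhead
    have hpc : (a :: t).Pairwise (fun b d => τ.idxOf b < τ.idxOf d) :=
      (pairwise_idxOf hnd).sublist hsub
    refine ⟨x :: a :: t, List.isChain_cons_cons.2 ⟨hinc, hch⟩, ?_, rfl, ?_⟩
    · apply sublist_of_pairwise
      · intro a ha
        rcases List.mem_cons.1 ha with rfl | ha
        · exact hx
        · exact hsub.subset ha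
      · refine List.pairwise_cons.2 ⟨?_, hpc⟩
        intro b hb
        exact lt_of_lt_of_le hlt (head_le hpc rfl b hb)
    · rw [List.getLast?_cons_cons]
      exact hlast

private lemma fence_append {τ : List P} (hnd : τ.Nodup) {x z y : P}
    (hy : y ∈ τ) (hlt : τ.idxOf z < τ.idxOf y) (hinc : Incomp z y)
    (h : HasFence τ x z) : HasFence τ x y := by
  obtain ⟨c, hch, hsub, hhead, hlast⟩ := h
  have hpc : c.Pairwise (fun a b => τ.idxOf a < τ.idxOf b) :=
    (pairwise_idxOf hnd).sublist hsub
  refine ⟨c ++ [y], ?_, ?_, ?_, by simp [List.getLast?_append]⟩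
  · refine List.isChain_append.2 ⟨hch, List.isChain_singleton _, ?_⟩
    intro a ha b hb
    simp only [List.head?_cons, Option.mem_def, Option.some.injEq] at hb
    subst hb
    have : a = z := by
      rw [Option.mem_def, hlast, Option.some.injEq] at ha
      exact ha.symm
    subst this
    exact hinc
  · apply sublist_of_pairwise
    · intro a ha
      rcases List.mem_append.1 ha with ha | ha
      · exact hsub.subset ha
      · simp only [List.mem_singleton] at ha; subst ha; exact hy
    · refine List.pairwise_append.2 ⟨hpc, by simp, ?_⟩
      intro a ha b hb
      simp only [List.mem_singleton] at hb
      subst hb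
      exact lt_of_le_of_lt (le_last hpc hlast a ha) hlt
  · rw [List.head?_append, hhead]
    rfl

private lemma fence_trans {τ : List P} (hnd : τ.Nodup) {x z y : P}
    (h1 : HasFence τ x z) (h2 : HasFence τ z y) : HasFence τ x y := by
  obtain ⟨c₁, hch₁, hsub₁, hhead₁, hlast₁⟩ := h1
  obtain ⟨c₂, hch₂, hsub₂, hhead₂, hlast₂⟩ := h2
  cases c₂ with
  | nil => simp at hhead₂
  | cons a t =>
    simp only [List.head?_cons, Option.some.injEq] at hhead₂
    subst hhead₂
    cases t with
    | nil =>
      simp only [List.getLast?_singleton, Option.some.injEq] at hlast₂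
      subst hlast₂
      exact ⟨c₁, hch₁, hsub₁, hhead₁, hlast₁⟩
    | cons w t' =>
      have hp₁ : c₁.Pairwise (fun a b => τ.idxOf a < τ.idxOf b) :=
        (pairwise_idxOf hnd).sublist hsub₁
      have hp₂ : (a :: w :: t').Pairwise (fun a b => τ.idxOf a < τ.idxOf b) :=
        (pairwise_idxOf hnd).sublist hsub₂
      rcases List.pairwise_cons.1 hp₂ with ⟨hz₂, hp₂'⟩
      rcases List.isChain_cons.1 hch₂ with ⟨hzw, hch₂'⟩
      refine ⟨c₁ ++ w :: t', ?_, ?_, ?_, ?_⟩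
      · refine List.isChain_append.2 ⟨hch₁, hch₂', ?_⟩
        intro u hu b hb
        obtain rfl : u = a := by
          rw [Option.mem_def, hlast₁, Option.some.injEq] at hu
          exact hu.symm
        exact hzw b hb
      · apply sublist_of_pairwise
        · intro a ha
          rcases List.mem_append.1 ha with ha | ha
          · exact hsub₁.subset ha
          · exact hsub₂.subset (List.mem_cons_of_mem _ ha)
        · refine List.pairwise_append.2 ⟨hp₁, hp₂', ?_⟩
          intro a ha b hb
          exact lt_of_le_of_lt (le_last hp₁ hlast₁ a ha) (hz₂ b hb)
      · cases c₁ with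
        | nil => simp at hhead₁
        | cons u s =>
          simp only [List.head?_cons, Option.some.injEq] at hhead₁
          subst hhead₁
          rfl
      · rw [List.getLast?_append]
        rw [List.getLast?_cons_cons] at hlast₂
        rw [hlast₂]
        rfl
end Fence


/-- Induction step of the main proof. Suppose `x ≺ y`, `x` precedes `y`
in `τ`, there is no `(x,y)`-fence in `τ`, and (induction hypothesis) every pair of
elements separated by fewer elements than `x` and `y` are in `τ` is not critical in any
terminal ordering. If moreover `τ` is terminal, then every `z` lying strictly between
`x` and `y` in `τ` is either "small" (`z ≺ x` and `z ≺ y`) or "large" (`x ≺ z` and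
`y ≺ z`). -/
theorem stmt_12 {P : Type*} [PartialOrder P] [DecidableEq P] (τ : List P)
    (hτ : IsOrdering τ) (x y : P)
    (hxy : x < y) (hprec : Precedes τ x y) (hfence : ¬ HasFence τ x y)
    (hind : ∀ τ' : List P, IsOrdering τ' → Terminal τ' → ∀ a b : P,
      τ'.idxOf b - τ'.idxOf a - 1 < τ.idxOf y - τ.idxOf x - 1 →
      ¬ Critical τ' a b)
    (hterm : Terminal τ) :
    ∀ z : P, Precedes τ x z → Precedes τ z y →
      (z < x ∧ z < y) ∨ (x < z ∧ y < z) := by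

  obtain ⟨hnd, hall⟩ := hτ
  intro z hxz hzy
  unfold Precedes at hprec hxz hzy
  have hxτ := hall x
  have hyτ := hall y
  have hzτ := hall z
  have fxz : x < z → HasFence τ x z := by
    intro h
    have hnc := hind τ ⟨hnd, hall⟩ hterm x z (by omega)
    unfold Critical at hnc
    push_neg at hnc
    exact hnc h hxz
  have fzy : z < y → HasFence τ z y := by
    intro h
    have hnc := hind τ ⟨hnd, hall⟩ hterm z y (by omega)
    unfold Critical at hnc
    push_neg at hnc
    exact hnc h hzy
  by_cases hzx : z < x
  · by_cases hzy' : z < y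
    · exact Or.inl ⟨hzx, hzy'⟩
    · exact absurd (lt_trans hzx hxy) hzy'
  · by_cases hxz' : x < z
    · by_cases hyz : y < z
      · exact Or.inr ⟨hxz', hyz⟩
      · by_cases hzy' : z < y
        · exact absurd (fence_trans hnd (fxz hxz') (fzy hzy')) hfence
        · exact absurd (fence_append hnd hyτ hzy ⟨hzy', hyz⟩ (fxz hxz')) hfence
    · have hinc : Incomp x z := ⟨hxz', hzx⟩
      by_cases hzy' : z < y
      · exact absurd (fence_prepend hnd hxτ hxz hinc (fzy hzy')) hfence
      · by_cases hyz : y < z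
        · exact absurd (lt_trans hxy hyz) hxz'
        · exact absurd (fence_base hnd hxτ hzτ hyτ hxz hzy hinc ⟨hzy', hyz⟩) hfence
end
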